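/- Let K be a skew field and A an m × n matrix over K of rank k. Given U of size (m−k) × m with UA = 0 and rank U = m−k, and V of size n × (n−k) with AV = 0 and rank V = n−k, and subsets I ⊂ {1,…,m}, J ⊂ {1,…,n} with |I| = m−k, |J| = n−k: if U_I or V_J is not invertible, then the submatrix A_{I^c J^c} (rows indexed by I^c, columns by J^c) is not invertible. -/

import Mathlib

open Matrix

lemma aux_vecMul_unit {K : Type*} [DivisionRing K] {s : ℕ}
    (M : Matrix (Fin s) (Fin s) K)
    (h : ∀ v : Fin s → K, v ᵥ* M = 0 → v = 0) : IsUnit M := by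
  have hinj : Function.Injective M.vecMulLinear := by
    rw [← LinearMap.ker_eq_bot, LinearMap.ker_eq_bot']
    intro v hv
    exact h v hv
  have hsurj : Function.Surjective M.vecMul :=
    LinearMap.surjective_of_injective hinj
  obtain ⟨B, hB⟩ := Matrix.vecMul_surjective_iff_exists_left_inverse.mp hsurj
  have h1 : ∀ v : Fin s → K, v ᵥ* (M * B) = v := by
    intro v
    apply hinj
    show (v ᵥ* (M * B)) ᵥ* M = v ᵥ* M
    rw [Matrix.vecMul_vecMul, Matrix.mul_assoc, hB, Matrix.mul_one]
  have hMB : M * B = 1 := by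
    ext i j
    have := congrFun (h1 (Pi.single i 1)) j
    rw [Matrix.single_one_vecMul, Matrix.row_apply] at this
    rw [this, Matrix.one_apply, Pi.single_apply]
    simp [eq_comm]
  exact ⟨⟨M, B, hMB, hB⟩, rfl⟩

lemma aux_op_sum {K : Type*} [AddCommMonoid K] {ι : Type*} (s : Finset ι) (f : ι → K) :
    ∑ i ∈ s, MulOpposite.op (f i) = MulOpposite.op (∑ i ∈ s, f i) :=
  (map_sum MulOpposite.opAddEquiv f s).symm

lemma aux_mulVec_unit {K : Type*} [DivisionRing K] {s : ℕ}
    (M : Matrix (Fin s) (Fin s) K)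
    (h : ∀ v : Fin s → K, M *ᵥ v = 0 → v = 0) : IsUnit M := by
  have key : ∀ X Y : Matrix (Fin s) (Fin s) K,
      (Yᵀ.map MulOpposite.op) * (Xᵀ.map MulOpposite.op) = (X * Y)ᵀ.map MulOpposite.op := by
    intro X Y
    ext i j
    simp only [Matrix.mul_apply, Matrix.map_apply, Matrix.transpose_apply,
      ← MulOpposite.op_mul]
    exact aux_op_sum _ _
  have hone : ((1 : Matrix (Fin s) (Fin s) K)ᵀ.map MulOpposite.op) = 1 := by
    ext i j
    simp [Matrix.one_apply, Matrix.map_apply, apply_ite MulOpposite.op, eq_comm]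
  have finj : Function.Injective
      (fun X : Matrix (Fin s) (Fin s) K => Xᵀ.map MulOpposite.op) := by
    intro X Y hXY
    ext i j
    exact MulOpposite.op_injective (congrFun (congrFun hXY j) i)
  have hN : IsUnit (Mᵀ.map MulOpposite.op) := by
    apply aux_vecMul_unit
    intro v hv
    have hc : M *ᵥ (fun i => (v i).unop) = 0 := by
      funext j
      have hj := congrFun hv j
      simp only [Matrix.vecMul, dotProduct, Matrix.map_apply,
        Matrix.transpose_apply, Pi.zero_apply] at hj
      apply MulOpposite.op_injective
      simp only [Matrix.mulVec, dotProduct, Pi.zero_apply, MulOpposite.op_zero]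
      rw [← aux_op_sum, ← hj]
      apply Finset.sum_congr rfl
      intro i _
      simp
    have hv0 := h _ hc
    funext i
    have hi := congrFun hv0 i
    simp only [Pi.zero_apply] at hi ⊢
    rw [← MulOpposite.op_unop (v i), hi, MulOpposite.op_zero]
  obtain ⟨u, hu⟩ := hN
  let B : Matrix (Fin s) (Fin s) Kᵐᵒᵖ := Units.val u⁻¹
  have h1 : (Mᵀ.map MulOpposite.op) * B = 1 := by rw [← hu]; exact u.mul_inv
  have h2 : B * (Mᵀ.map MulOpposite.op) = 1 := by rw [← hu]; exact u.inv_mul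
  set C : Matrix (Fin s) (Fin s) K := Bᵀ.map MulOpposite.unop with hC
  have hBC : B = Cᵀ.map MulOpposite.op := by
    ext i j; simp [hC]
  have hCM : C * M = 1 := by
    apply finj
    show (C * M)ᵀ.map MulOpposite.op = (1 : Matrix (Fin s) (Fin s) K)ᵀ.map MulOpposite.op
    rw [← key C M, ← hBC, h1, hone]
  have hMC : M * C = 1 := by
    apply finj
    show (M * C)ᵀ.map MulOpposite.op = (1 : Matrix (Fin s) (Fin s) K)ᵀ.map MulOpposite.op
    rw [← key M C, ← hBC, h2, hone]
  exact ⟨⟨M, C, hMC, hCM⟩, rfl⟩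

lemma aux_sum_split {K : Type*} [AddCommMonoid K] {m p k : ℕ} (I : Finset (Fin m))
    (hI : I.card = p) (hIc : Iᶜ.card = k) (f : Fin m → K) :
    ∑ i, f i = (∑ l : Fin p, f (I.orderIsoOfFin hI l)) +
      ∑ a : Fin k, f (Iᶜ.orderIsoOfFin hIc a) := by
  rw [← Finset.sum_add_sum_compl I f]
  congr 1
  · rw [← Finset.sum_coe_sort I f, ← Equiv.sum_comp (I.orderIsoOfFin hI).toEquiv]
    rfl
  · rw [← Finset.sum_coe_sort Iᶜ f, ← Equiv.sum_comp (Iᶜ.orderIsoOfFin hIc).toEquiv]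
    rfl

/-- Lemma 5.2 (1): Let `K` be a skew field and `A` an `m × n` matrix over `K` of rank
`k`, with `U` a `(m−k) × m` matrix of full row rank with `UA = 0` (its rows spanning the
left kernel of `A`) and `V` an `n × (n−k)` matrix of full column rank with `AV = 0` (its
columns spanning the right kernel of `A`). For index sets `I ⊂ {1,…,m}`, `J ⊂ {1,…,n}`
with `|I| = m−k`, `|J| = n−k`: if `U_I` or `V_J` is not invertible, then the submatrix
`A_{I^c J^c}` is not invertible. Here `p = m − k` and `q = n − k`. -/
theorem submatrix_not_invertible
    (K : Type*) [DivisionRing K] (m n p q k : ℕ)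
    (A : Matrix (Fin m) (Fin n) K) (U : Matrix (Fin p) (Fin m) K)
    (V : Matrix (Fin n) (Fin q) K)
    (hUA : ∀ (l : Fin p) (j : Fin n), ∑ i, U l i * A i j = 0)
    (hAV : ∀ (i : Fin m) (c : Fin q), ∑ j, A i j * V j c = 0)
    (hUind : ∀ c : Fin p → K, (∀ i : Fin m, ∑ l, c l * U l i = 0) → c = 0)
    (hVind : ∀ c : Fin q → K, (∀ j : Fin n, ∑ l, V j l * c l = 0) → c = 0)
    (hUspan : ∀ u : Fin m → K, (∀ j : Fin n, ∑ i, u i * A i j = 0) →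
      ∃ c : Fin p → K, ∀ i, u i = ∑ l, c l * U l i)
    (hVspan : ∀ v : Fin n → K, (∀ i : Fin m, ∑ j, A i j * v j = 0) →
      ∃ c : Fin q → K, ∀ j, v j = ∑ l, V j l * c l)
    (I : Finset (Fin m)) (J : Finset (Fin n)) (hI : I.card = p) (hJ : J.card = q)
    (hIc : Iᶜ.card = k) (hJc : Jᶜ.card = k)
    (h : ¬ IsUnit (U.submatrix id fun l => (I.orderIsoOfFin hI l : Fin m)) ∨
         ¬ IsUnit (V.submatrix (fun l => (J.orderIsoOfFin hJ l : Fin n)) id)) :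
    ¬ IsUnit (A.submatrix (fun a : Fin k => (Iᶜ.orderIsoOfFin hIc a : Fin m))
        (fun b : Fin k => (Jᶜ.orderIsoOfFin hJc b : Fin n))) := by
  intro hA'
  obtain ⟨W, hW1, hW2⟩ : ∃ W : Matrix (Fin k) (Fin k) K,
      (A.submatrix (fun a : Fin k => (Iᶜ.orderIsoOfFin hIc a : Fin m))
        (fun b : Fin k => (Jᶜ.orderIsoOfFin hJc b : Fin n))) * W = 1 ∧
      W * (A.submatrix (fun a : Fin k => (Iᶜ.orderIsoOfFin hIc a : Fin m))
        (fun b : Fin k => (Jᶜ.orderIsoOfFin hJc b : Fin n))) = 1 := by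
    obtain ⟨x, hx⟩ := hA'
    exact ⟨Units.val x⁻¹, by rw [← hx]; exact x.mul_inv, by rw [← hx]; exact x.inv_mul⟩
  rcases h with hU | hV
  · apply hU
    apply aux_vecMul_unit
    intro c hc
    -- u := c ᵥ* U, vanishes on I and is a left-annihilator of A
    have huI : ∀ l : Fin p, ∑ l', c l' * U l' (I.orderIsoOfFin hI l : Fin m) = 0 :=
      fun l => congrFun hc l
    have huA : ∀ j : Fin n, ∑ i, (∑ l, c l * U l i) * A i j = 0 := by
      intro j
      have h1 : ∑ i, (∑ l, c l * U l i) * A i j = ∑ l, c l * ∑ i, U l i * A i j := by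
        simp only [Finset.sum_mul, Finset.mul_sum, mul_assoc]
        rw [Finset.sum_comm]
      rw [h1]
      apply Finset.sum_eq_zero
      intro l _
      rw [hUA l j, mul_zero]
    have hwA : ∀ b : Fin k,
        ∑ a : Fin k, (∑ l, c l * U l (Iᶜ.orderIsoOfFin hIc a : Fin m)) *
          A (Iᶜ.orderIsoOfFin hIc a : Fin m) (Jᶜ.orderIsoOfFin hJc b : Fin n) = 0 := by
      intro b
      have h0 := huA (Jᶜ.orderIsoOfFin hJc b : Fin n)
      rw [aux_sum_split I hI hIc
        (fun i => (∑ l, c l * U l i) * A i (Jᶜ.orderIsoOfFin hJc b : Fin n))] at h0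
      have hz : ∑ l : Fin p, (∑ l', c l' * U l' (I.orderIsoOfFin hI l : Fin m)) *
          A (I.orderIsoOfFin hI l : Fin m) (Jᶜ.orderIsoOfFin hJc b : Fin n) = 0 := by
        apply Finset.sum_eq_zero
        intro l _
        rw [huI l, zero_mul]
      rw [hz, zero_add] at h0
      exact h0
    -- the restricted vector kills the invertible submatrix
    have hw0 : (fun a : Fin k => ∑ l, c l * U l (Iᶜ.orderIsoOfFin hIc a : Fin m)) = 0 := by
      set w : Fin k → K := fun a => ∑ l, c l * U l (Iᶜ.orderIsoOfFin hIc a : Fin m) with hwdef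
      have hvm : w ᵥ* (A.submatrix (fun a : Fin k => (Iᶜ.orderIsoOfFin hIc a : Fin m))
          (fun b : Fin k => (Jᶜ.orderIsoOfFin hJc b : Fin n))) = 0 := by
        funext b
        exact hwA b
      calc w = w ᵥ* 1 := (Matrix.vecMul_one w).symm
        _ = w ᵥ* ((A.submatrix (fun a : Fin k => (Iᶜ.orderIsoOfFin hIc a : Fin m))
            (fun b : Fin k => (Jᶜ.orderIsoOfFin hJc b : Fin n))) * W) := by rw [hW1]
        _ = (w ᵥ* (A.submatrix (fun a : Fin k => (Iᶜ.orderIsoOfFin hIc a : Fin m))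
            (fun b : Fin k => (Jᶜ.orderIsoOfFin hJc b : Fin n)))) ᵥ* W := by
            rw [Matrix.vecMul_vecMul]
        _ = 0 := by rw [hvm, Matrix.zero_vecMul]
    apply hUind
    intro i
    by_cases hi : i ∈ I
    · have he : (I.orderIsoOfFin hI ((I.orderIsoOfFin hI).symm ⟨i, hi⟩) : Fin m) = i := by
        rw [OrderIso.apply_symm_apply]
      rw [← he]
      exact huI _
    · have hi' : i ∈ Iᶜ := Finset.mem_compl.mpr hi
      have he : (Iᶜ.orderIsoOfFin hIc ((Iᶜ.orderIsoOfFin hIc).symm ⟨i, hi'⟩) : Fin m) = i := by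
        rw [OrderIso.apply_symm_apply]
      rw [← he]
      exact congrFun hw0 _
  · apply hV
    apply aux_mulVec_unit
    intro c hc
    have hvJ : ∀ l : Fin q, ∑ l', V (J.orderIsoOfFin hJ l : Fin n) l' * c l' = 0 :=
      fun l => congrFun hc l
    have hAv : ∀ i : Fin m, ∑ j, A i j * (∑ l, V j l * c l) = 0 := by
      intro i
      have h1 : ∑ j, A i j * (∑ l, V j l * c l) = ∑ l, (∑ j, A i j * V j l) * c l := by
        simp only [Finset.mul_sum, Finset.sum_mul, mul_assoc]
        rw [Finset.sum_comm]
      rw [h1]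
      apply Finset.sum_eq_zero
      intro l _
      rw [hAV i l, zero_mul]
    have hwA : ∀ a : Fin k,
        ∑ b : Fin k, A (Iᶜ.orderIsoOfFin hIc a : Fin m) (Jᶜ.orderIsoOfFin hJc b : Fin n) *
          (∑ l, V (Jᶜ.orderIsoOfFin hJc b : Fin n) l * c l) = 0 := by
      intro a
      have h0 := hAv (Iᶜ.orderIsoOfFin hIc a : Fin m)
      rw [aux_sum_split J hJ hJc
        (fun j => A (Iᶜ.orderIsoOfFin hIc a : Fin m) j * (∑ l, V j l * c l))] at h0
      have hz : ∑ l : Fin q, A (Iᶜ.orderIsoOfFin hIc a : Fin m) (J.orderIsoOfFin hJ l : Fin n) *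
          (∑ l', V (J.orderIsoOfFin hJ l : Fin n) l' * c l') = 0 := by
        apply Finset.sum_eq_zero
        intro l _
        rw [hvJ l, mul_zero]
      rw [hz, zero_add] at h0
      exact h0
    have hw0 : (fun b : Fin k => ∑ l, V (Jᶜ.orderIsoOfFin hJc b : Fin n) l * c l) = 0 := by
      set w : Fin k → K := fun b => ∑ l, V (Jᶜ.orderIsoOfFin hJc b : Fin n) l * c l with hwdef
      have hmv : (A.submatrix (fun a : Fin k => (Iᶜ.orderIsoOfFin hIc a : Fin m))
          (fun b : Fin k => (Jᶜ.orderIsoOfFin hJc b : Fin n))) *ᵥ w = 0 := by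
        funext a
        exact hwA a
      calc w = 1 *ᵥ w := (Matrix.one_mulVec w).symm
        _ = (W * (A.submatrix (fun a : Fin k => (Iᶜ.orderIsoOfFin hIc a : Fin m))
            (fun b : Fin k => (Jᶜ.orderIsoOfFin hJc b : Fin n)))) *ᵥ w := by rw [hW2]
        _ = W *ᵥ ((A.submatrix (fun a : Fin k => (Iᶜ.orderIsoOfFin hIc a : Fin m))
            (fun b : Fin k => (Jᶜ.orderIsoOfFin hJc b : Fin n))) *ᵥ w) := by
            rw [Matrix.mulVec_mulVec]
        _ = 0 := by rw [hmv, Matrix.mulVec_zero]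
    apply hVind
    intro j
    by_cases hj : j ∈ J
    · have he : (J.orderIsoOfFin hJ ((J.orderIsoOfFin hJ).symm ⟨j, hj⟩) : Fin n) = j := by
        rw [OrderIso.apply_symm_apply]
      rw [← he]
      exact hvJ _
    · have hj' : j ∈ Jᶜ := Finset.mem_compl.mpr hj
      have he : (Jᶜ.orderIsoOfFin hJc ((Jᶜ.orderIsoOfFin hJc).symm ⟨j, hj'⟩) : Fin n) = j := by
        rw [OrderIso.apply_symm_apply]
      rw [← he]
      exact congrFun hw0 _
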